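/- arXiv:2406.10925 — 4 statements merged into one kernel-verified Lean document; each statement's English description precedes it below -/
import Mathlib

section
/- If M ∈ GL(2n, ℝ) can be written as a product M = A·S of an invertible antisymmetric matrix A and a symmetric matrix S, then M is conjugate to -M (i.e., there exists Λ ∈ GL(2n, ℝ) with Λ⁻¹MΛ = -M). -/
open Matrix Polynomial Module DirectSum

noncomputable section

def GoodB (N : Type) [AddCommGroup N] [Module ℝ N] [Module ℝ[X] N] : Prop :=
  ∃ B : N →ₗ[ℝ] N →ₗ[ℝ] ℝ,
    (∀ x y, B x y = B y x) ∧
    (∀ x y, B ((X : ℝ[X]) • x) y = B x ((X : ℝ[X]) • y)) ∧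
    (∀ x : N, x ≠ 0 → ∃ y, B x y ≠ 0)

lemma GoodB.of_equiv {N N' : Type}
    [AddCommGroup N] [Module ℝ N] [Module ℝ[X] N] [IsScalarTower ℝ ℝ[X] N]
    [AddCommGroup N'] [Module ℝ N'] [Module ℝ[X] N'] [IsScalarTower ℝ ℝ[X] N']
    (e : N ≃ₗ[ℝ[X]] N') (h : GoodB N') : GoodB N := by
  obtain ⟨B, hsym, hbal, hnd⟩ := h
  let f : N →ₗ[ℝ] N' := (e.restrictScalars ℝ).toLinearMap
  refine ⟨B.compl₁₂ f f, fun x y => hsym _ _, fun x y => ?_, fun x hx => ?_⟩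
  · have h1 : f ((X : ℝ[X]) • x) = (X : ℝ[X]) • f x := e.map_smul _ _
    have h2 : f ((X : ℝ[X]) • y) = (X : ℝ[X]) • f y := e.map_smul _ _
    simp only [LinearMap.compl₁₂_apply, h1, h2]
    exact hbal _ _
  · have hfx : f x ≠ 0 := by
      intro h0
      exact hx ((e.restrictScalars ℝ).map_eq_zero_iff.mp h0)
    obtain ⟨y', hy'⟩ := hnd (f x) hfx
    exact ⟨e.symm y', by simpa [f] using hy'⟩

lemma goodB_monic_quot_aux (q : ℝ[X]) (hq : q.Monic) :
    ∃ B : (ℝ[X] ⧸ (ℝ[X] ∙ q)) →ₗ[ℝ] (ℝ[X] ⧸ (ℝ[X] ∙ q)) →ₗ[ℝ] ℝ,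
      (∀ a b : ℝ[X], B (Submodule.Quotient.mk a) (Submodule.Quotient.mk b)
        = ((a * b) %ₘ q).coeff (q.natDegree - 1)) := by
  classical
  set d := q.natDegree with hd
  -- bilinear form on ℝ[X]
  let Φ : ℝ[X] →ₗ[ℝ] ℝ[X] →ₗ[ℝ] ℝ := LinearMap.mk₂ ℝ
    (fun a b => ((a * b) %ₘ q).coeff (d - 1))
    (fun a a' b => by
      show (((a + a') * b) %ₘ q).coeff (d-1) = ((a*b) %ₘ q).coeff (d-1) + ((a'*b) %ₘ q).coeff (d-1)
      rw [add_mul, Polynomial.add_modByMonic, Polynomial.coeff_add])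
    (fun c a b => by
      show (((c • a) * b) %ₘ q).coeff (d-1) = c • ((a*b) %ₘ q).coeff (d-1)
      rw [smul_mul_assoc, Polynomial.smul_modByMonic, Polynomial.coeff_smul])
    (fun a b b' => by
      show ((a * (b + b')) %ₘ q).coeff (d-1) = ((a*b) %ₘ q).coeff (d-1) + ((a*b') %ₘ q).coeff (d-1)
      rw [mul_add, Polynomial.add_modByMonic, Polynomial.coeff_add])
    (fun c a b => by
      show ((a * (c • b)) %ₘ q).coeff (d-1) = c • ((a*b) %ₘ q).coeff (d-1)
      rw [mul_smul_comm, Polynomial.smul_modByMonic, Polynomial.coeff_smul])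
  have hΦq : ∀ a b : ℝ[X], q ∣ a * b → Φ a b = 0 := by
    intro a b hdvd
    show (((a * b) %ₘ q).coeff (d-1)) = 0
    rw [(Polynomial.modByMonic_eq_zero_iff_dvd hq).mpr hdvd, Polynomial.coeff_zero]
  set p' : Submodule ℝ ℝ[X] := Submodule.restrictScalars ℝ (ℝ[X] ∙ q) with hp'
  have hmemp' : ∀ x ∈ p', q ∣ x := by
    intro x hx
    rw [hp', Submodule.restrictScalars_mem, Submodule.mem_span_singleton] at hx
    obtain ⟨c, rfl⟩ := hx
    exact Dvd.intro _ (by rw [smul_eq_mul, mul_comm])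
  -- descend in the second argument
  let Φ₁ : ℝ[X] →ₗ[ℝ] (ℝ[X] ⧸ p') →ₗ[ℝ] ℝ :=
    { toFun := fun a => Submodule.liftQ p' (Φ a)
        (by intro x hx
            exact hΦq a x (Dvd.dvd.mul_left (hmemp' x hx) a))
      map_add' := by
        intro a a'
        apply LinearMap.ext
        intro z
        obtain ⟨x, rfl⟩ := Submodule.Quotient.mk_surjective _ z
        simp [Submodule.liftQ_apply]
        rfl
      map_smul' := by
        intro c a
        apply LinearMap.ext
        intro z
        obtain ⟨x, rfl⟩ := Submodule.Quotient.mk_surjective _ z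
        simp [Submodule.liftQ_apply]
        exact Or.inl rfl }
  let Φ₂ : (ℝ[X] ⧸ p') →ₗ[ℝ] (ℝ[X] ⧸ p') →ₗ[ℝ] ℝ :=
    Submodule.liftQ p' Φ₁
      (by intro x hx
          apply LinearMap.ext
          intro z
          obtain ⟨b, rfl⟩ := Submodule.Quotient.mk_surjective _ z
          show Φ x b = 0
          exact hΦq x b (Dvd.dvd.mul_right (hmemp' x hx) b))
  let ε : (ℝ[X] ⧸ (ℝ[X] ∙ q)) ≃ₗ[ℝ] (ℝ[X] ⧸ p') :=
    (Submodule.Quotient.restrictScalarsEquiv ℝ (ℝ[X] ∙ q)).symm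
  refine ⟨Φ₂.compl₁₂ ε.toLinearMap ε.toLinearMap, ?_⟩
  intro a b
  have ha : ε (Submodule.Quotient.mk a) = Submodule.Quotient.mk a :=
    Submodule.Quotient.restrictScalarsEquiv_symm_mk ℝ _ a
  have hb : ε (Submodule.Quotient.mk b) = Submodule.Quotient.mk b :=
    Submodule.Quotient.restrictScalarsEquiv_symm_mk ℝ _ b
  simp only [LinearMap.compl₁₂_apply, LinearEquiv.coe_coe, ha, hb]
  rfl

lemma goodB_monic_quot (q : ℝ[X]) (hq : q.Monic) :
    GoodB (ℝ[X] ⧸ (ℝ[X] ∙ q)) := by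
  obtain ⟨B, hB⟩ := goodB_monic_quot_aux q hq
  set d := q.natDegree with hd
  refine ⟨B, ?_, ?_, ?_⟩
  · intro x y
    obtain ⟨a, rfl⟩ := Submodule.Quotient.mk_surjective _ x
    obtain ⟨b, rfl⟩ := Submodule.Quotient.mk_surjective _ y
    rw [hB, hB, mul_comm]
  · intro x y
    obtain ⟨a, rfl⟩ := Submodule.Quotient.mk_surjective _ x
    obtain ⟨b, rfl⟩ := Submodule.Quotient.mk_surjective _ y
    have h1 : (X : ℝ[X]) • (Submodule.Quotient.mk a : ℝ[X] ⧸ (ℝ[X] ∙ q))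
        = Submodule.Quotient.mk (X * a) := rfl
    have h2 : (X : ℝ[X]) • (Submodule.Quotient.mk b : ℝ[X] ⧸ (ℝ[X] ∙ q))
        = Submodule.Quotient.mk (X * b) := rfl
    rw [h1, h2, hB, hB]
    ring_nf
  · intro x hx
    obtain ⟨a, rfl⟩ := Submodule.Quotient.mk_surjective _ x
    -- reduce a mod q
    set r := a %ₘ q with hr
    have hqr : Submodule.Quotient.mk (p := (ℝ[X] ∙ q)) a = Submodule.Quotient.mk r := by
      rw [Submodule.Quotient.eq]
      rw [Submodule.mem_span_singleton]
      have hdiv := Polynomial.modByMonic_add_div a q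
      exact ⟨a /ₘ q, by rw [smul_eq_mul]; linear_combination hdiv⟩
    rcases Nat.eq_zero_or_pos d with hd0 | hd1
    · -- q = 1, quotient is trivial: contradiction with x ≠ 0
      exfalso
      apply hx
      rw [Submodule.Quotient.mk_eq_zero]
      rw [Submodule.mem_span_singleton]
      have hq1 : q = 1 := hq.natDegree_eq_zero.mp (by rw [← hd, hd0])
      exact ⟨a, by rw [hq1, smul_eq_mul, mul_one]⟩
    · have hr0 : r ≠ 0 := by
        intro h0
        apply hx
        rw [hqr, h0]
        exact Submodule.Quotient.mk_eq_zero _ |>.mpr (Submodule.zero_mem _)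
      have hrdeg : r.natDegree < d := by
        apply Polynomial.natDegree_lt_natDegree hr0
        exact Polynomial.degree_modByMonic_lt a hq
      set k := d - 1 - r.natDegree with hk
      have hsum : r.natDegree + k = d - 1 := by omega
      refine ⟨Submodule.Quotient.mk (X ^ k), ?_⟩
      rw [hqr, hB]
      have hmod : (r * X ^ k) %ₘ q = r * X ^ k := by
        rw [Polynomial.modByMonic_eq_self_iff hq]
        have h1 : (r * X ^ k).natDegree = r.natDegree + k := by
          rw [Polynomial.natDegree_mul hr0 (pow_ne_zero _ Polynomial.X_ne_zero),
            Polynomial.natDegree_X_pow]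
        calc (r * X ^ k).degree ≤ ((r * X ^ k).natDegree : WithBot ℕ) :=
              Polynomial.degree_le_natDegree
          _ < (d : WithBot ℕ) := by
              rw [h1]; exact_mod_cast (by omega : r.natDegree + k < d)
          _ = q.degree := (Polynomial.degree_eq_natDegree hq.ne_zero).symm
      rw [hmod, ← hsum, Polynomial.coeff_mul_X_pow]
      exact Polynomial.leadingCoeff_ne_zero.mpr hr0

lemma goodB_directSum {ι : Type} [Fintype ι] [DecidableEq ι] (Ni : ι → Type)
    [∀ i, AddCommGroup (Ni i)] [∀ i, Module ℝ (Ni i)] [∀ i, Module ℝ[X] (Ni i)]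
    (h : ∀ i, GoodB (Ni i)) : GoodB (⨁ i, Ni i) := by
  choose B hsym hbal hnd using h
  let proj : ∀ i, (⨁ j, Ni j) →ₗ[ℝ] Ni i := fun i => DFinsupp.lapply i
  let Btot : (⨁ j, Ni j) →ₗ[ℝ] (⨁ j, Ni j) →ₗ[ℝ] ℝ :=
    ∑ i, (B i).compl₁₂ (proj i) (proj i)
  have happ : ∀ x y : ⨁ j, Ni j, Btot x y = ∑ i, B i (x i) (y i) := by
    intro x y
    simp only [Btot, LinearMap.sum_apply, LinearMap.compl₁₂_apply]
    rfl
  have hXapp : ∀ (x : ⨁ j, Ni j) (i : ι), ((X : ℝ[X]) • x) i = (X : ℝ[X]) • (x i) :=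
    fun x i => DFinsupp.smul_apply _ _ _
  refine ⟨Btot, ?_, ?_, ?_⟩
  · intro x y; rw [happ, happ]; exact Finset.sum_congr rfl fun i _ => hsym i _ _
  · intro x y
    rw [happ, happ]
    refine Finset.sum_congr rfl fun i _ => ?_
    rw [hXapp, hXapp]
    exact hbal i _ _
  · intro x hx
    have : ∃ i, x i ≠ 0 := by
      by_contra hall
      push_neg at hall
      exact hx (DFinsupp.ext hall)
    obtain ⟨i, hi⟩ := this
    obtain ⟨y, hy⟩ := hnd i (x i) hi
    refine ⟨DirectSum.of Ni i y, ?_⟩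
    rw [happ]
    rw [Finset.sum_eq_single i]
    · rwa [DirectSum.of_eq_same]
    · intro j _ hj
      rw [DirectSum.of_eq_of_ne _ _ _ hj, map_zero]
    · intro hmem; exact absurd (Finset.mem_univ i) hmem

lemma goodB_span_singleton (g : ℝ[X]) (hg : g ≠ 0) : GoodB (ℝ[X] ⧸ (ℝ[X] ∙ g)) := by
  set q : ℝ[X] := g * Polynomial.C (g.leadingCoeff)⁻¹ with hqdef
  have hq : q.Monic := Polynomial.monic_mul_leadingCoeff_inv hg
  have hspan : (ℝ[X] ∙ g) = (ℝ[X] ∙ q) := by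
    have hu : IsUnit (Polynomial.C (g.leadingCoeff)⁻¹) :=
      Polynomial.isUnit_C.mpr (isUnit_iff_ne_zero.mpr (inv_ne_zero
        (Polynomial.leadingCoeff_ne_zero.mpr hg)))
    exact Submodule.span_singleton_eq_span_singleton.mpr
      ⟨hu.unit, by rw [Units.smul_def, IsUnit.unit_spec, smul_eq_mul, mul_comm]⟩
  exact GoodB.of_equiv (Submodule.quotEquivOfEq _ _ hspan) (goodB_monic_quot q hq)


lemma goodB_aeval {m : ℕ} (f : Module.End ℝ (Fin m → ℝ)) : GoodB (AEval' f) := by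
  classical
  have htor : Module.IsTorsion ℝ[X] (AEval' f) := by
    intro x
    refine ⟨⟨f.charpoly, mem_nonZeroDivisors_of_ne_zero f.charpoly_monic.ne_zero⟩, ?_⟩
    apply (Module.AEval'.of f).symm.injective
    rw [Submonoid.smul_def]
    simp [LinearMap.aeval_self_charpoly]
  obtain ⟨ι, fι, p, hp, e, ⟨l⟩⟩ :=
    Module.equiv_directSum_of_isTorsion (R := ℝ[X]) (M := AEval' f) htor
  haveI := fι
  have hgood : ∀ i, GoodB (ℝ[X] ⧸ (ℝ[X] ∙ (p i ^ e i))) := fun i =>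
    goodB_span_singleton _ (pow_ne_zero _ (hp i).ne_zero)
  exact GoodB.of_equiv l (goodB_directSum _ hgood)

/-- Any real square matrix is similar to its transpose, in the form `Mᵀ * P = P * M`. -/
lemma exists_transpose_conj (m : ℕ) (M : Matrix (Fin m) (Fin m) ℝ) :
    ∃ P : Matrix (Fin m) (Fin m) ℝ, IsUnit P.det ∧ Mᵀ * P = P * M := by
  classical
  obtain ⟨B, hsym, hbal, hnd⟩ := goodB_aeval (M.mulVecLin)
  set φ : (Fin m → ℝ) ≃ₗ[ℝ] AEval' (M.mulVecLin) := Module.AEval'.of M.mulVecLin with hφ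
  -- bilinear form on plain vectors
  set B₀ : (Fin m → ℝ) → (Fin m → ℝ) → ℝ := fun x y => B (φ x) (φ y) with hB₀
  have hbal₀ : ∀ x y, B₀ (M.mulVec x) y = B₀ x (M.mulVec y) := by
    intro x y
    have h1 : φ (M.mulVec x) = (X : ℝ[X]) • φ x := by
      rw [hφ, Module.AEval'.X_smul_of, Matrix.mulVecLin_apply]
    have h2 : φ (M.mulVec y) = (X : ℝ[X]) • φ y := by
      rw [hφ, Module.AEval'.X_smul_of, Matrix.mulVecLin_apply]
    rw [hB₀]
    simp only [h1, h2]
    exact hbal _ _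
  have hsym₀ : ∀ x y, B₀ x y = B₀ y x := fun x y => hsym _ _
  have hadd₂ : ∀ x y y', B₀ x (y + y') = B₀ x y + B₀ x y' := by
    intro x y y'; rw [hB₀]; simp
  have hsmul₂ : ∀ (c : ℝ) (x y : Fin m → ℝ), B₀ x (c • y) = c * B₀ x y := by
    intro c x y; rw [hB₀]; simp
  have hsum₂ : ∀ (x : Fin m → ℝ) (v : Fin m → ℝ),
      B₀ x v = ∑ l, v l * B₀ x (Pi.single l 1) := by
    intro x v
    have hv : v = ∑ l, v l • (Pi.single l 1 : Fin m → ℝ) := by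
      ext j
      simp [Finset.sum_apply, Pi.single_apply]
    conv_lhs => rw [hv]
    rw [hB₀]
    simp only [_root_.map_sum, _root_.map_smul]
    simp [hsmul₂, hB₀]
  set P : Matrix (Fin m) (Fin m) ℝ :=
    Matrix.of (fun j k => B₀ (Pi.single j 1) (Pi.single k 1)) with hP
  have hPmulvec : ∀ v : Fin m → ℝ, P.mulVec v = fun j => B₀ (Pi.single j 1) v := by
    intro v
    ext j
    rw [Matrix.mulVec]
    rw [hsum₂ (Pi.single j 1) v]
    simp [dotProduct, hP, mul_comm]
  have hMsingle : ∀ (j l : Fin m), (M.mulVec (Pi.single j 1)) l = M l j := by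
    intro j l
    rw [Matrix.mulVec_single]
    exact mul_one _
  refine ⟨P, ?_, ?_⟩
  · -- invertibility via nondegeneracy
    by_contra hdet
    have hdet0 : P.det = 0 := by
      by_contra h0
      exact hdet (isUnit_iff_ne_zero.mpr h0)
    obtain ⟨v, hv0, hv⟩ := (Matrix.exists_mulVec_eq_zero_iff).mpr hdet0
    obtain ⟨y, hy⟩ := hnd (φ v) (by
      intro h0
      exact hv0 (φ.map_eq_zero_iff.mp h0))
    obtain ⟨w, rfl⟩ := φ.surjective y
    apply hy
    have hz : ∀ l : Fin m, B₀ (Pi.single l 1) v = 0 := by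
      intro l
      have := congrFun hv l
      rwa [hPmulvec] at this
    have : B₀ v w = 0 := by
      rw [hsum₂]
      refine Finset.sum_eq_zero fun l _ => ?_
      rw [hsym₀ v (Pi.single l 1), hz, mul_zero]
    exact this
  · -- the intertwining identity
    ext j k
    have lhs : (Mᵀ * P) j k = B₀ (M.mulVec (Pi.single j 1)) (Pi.single k 1) := by
      rw [Matrix.mul_apply]
      rw [hsym₀ (M.mulVec (Pi.single j 1)) (Pi.single k 1), hsum₂]
      refine Finset.sum_congr rfl fun l _ => ?_
      rw [Matrix.transpose_apply, hMsingle]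
      congr 1
      exact hsym₀ _ _
    have rhs : (P * M) j k = B₀ (Pi.single j 1) (M.mulVec (Pi.single k 1)) := by
      rw [Matrix.mul_apply, hsum₂]
      refine Finset.sum_congr rfl fun l _ => ?_
      rw [hMsingle, mul_comm]
      rfl
    rw [lhs, rhs, hbal₀]

theorem stmt1 (n : ℕ) (M A S : Matrix (Fin (2*n)) (Fin (2*n)) ℝ)
    (hM : IsUnit M.det) (hA : Aᵀ = -A) (hAinv : IsUnit A.det)
    (hS : Sᵀ = S) (hMAS : M = A * S) :
    ∃ Λ : Matrix (Fin (2*n)) (Fin (2*n)) ℝ, IsUnit Λ.det ∧ Λ⁻¹ * M * Λ = -M := by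
  obtain ⟨P, hPdet, hPconj⟩ := exists_transpose_conj (2*n) M
  refine ⟨A * P, ?_, ?_⟩
  · rw [Matrix.det_mul]
    exact hAinv.mul hPdet
  · have hMT : Mᵀ = -(S * A) := by
      rw [hMAS, Matrix.transpose_mul, hS, hA, Matrix.mul_neg]
    have hAinvM : A⁻¹ * M = S := by
      rw [hMAS, ← Matrix.mul_assoc, Matrix.nonsing_inv_mul A hAinv, Matrix.one_mul]
    have key : (A * P)⁻¹ * M * (A * P) = P⁻¹ * (A⁻¹ * M * A) * P := by
      rw [Matrix.mul_inv_rev]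
      noncomm_ring
    rw [key]
    have h2 : A⁻¹ * M * A = -Mᵀ := by
      rw [hAinvM, hMT, neg_neg]
    rw [h2]
    have h3 : P⁻¹ * (-Mᵀ) * P = -(P⁻¹ * (Mᵀ * P)) := by
      rw [Matrix.mul_neg, Matrix.neg_mul, Matrix.mul_assoc]
    rw [h3, hPconj, ← Matrix.mul_assoc, Matrix.nonsing_inv_mul P hPdet, Matrix.one_mul]

end
end

section
/- Let B₁, B₂ be n×n real matrices and suppose B₁ = A₁S₁ with A₁ antisymmetric, S₁ symmetric and invertible, and S₁B₂ symmetric. Then the block matrix M = [[B₁, B₂], [I, 0]] factors as M = Ω·Σ where Ω = [[A₁, -S₁⁻¹], [S₁⁻¹, 0]] is antisymmetric and Σ = [[S₁, 0], [0, -S₁B₂]] is symmetric. In particular, M is the product of an antisymmetric matrix and a symmetric matrix. -/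
open Matrix

theorem stmt7 (n : ℕ) (A₁ S₁ B₂ : Matrix (Fin n) (Fin n) ℝ)
    (hA : A₁ᵀ = -A₁) (hS : S₁ᵀ = S₁) (hSinv : IsUnit S₁.det)
    (hSB : (S₁ * B₂)ᵀ = S₁ * B₂) :
    Matrix.fromBlocks (A₁ * S₁) B₂ 1 0 =
      Matrix.fromBlocks A₁ (-S₁⁻¹) S₁⁻¹ 0 * Matrix.fromBlocks S₁ 0 0 (-(S₁ * B₂)) ∧
    (Matrix.fromBlocks A₁ (-S₁⁻¹) S₁⁻¹ (0 : Matrix (Fin n) (Fin n) ℝ))ᵀ =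
      -Matrix.fromBlocks A₁ (-S₁⁻¹) S₁⁻¹ 0 ∧
    (Matrix.fromBlocks S₁ 0 (0 : Matrix (Fin n) (Fin n) ℝ) (-(S₁ * B₂)))ᵀ =
      Matrix.fromBlocks S₁ 0 0 (-(S₁ * B₂)) := by
  have hStinv : S₁⁻¹ᵀ = S₁⁻¹ := by rw [transpose_nonsing_inv, hS]
  refine ⟨?_, ?_, ?_⟩
  · rw [fromBlocks_multiply]
    simp [← Matrix.mul_assoc, Matrix.nonsing_inv_mul _ hSinv]
  · rw [fromBlocks_transpose, hA, hStinv]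
    simp [fromBlocks_neg, hStinv]
  · rw [fromBlocks_transpose, hS, transpose_neg, hSB]
    simp
end

section
/- Let M = [[M₁₁, M₁₂], [M₂₁, M₂₂]] be a 2n×2n real matrix with M₂₁ invertible, and let B₁(M) = M₂₁M₁₁M₂₁⁻¹ + M₂₂ and B₂(M) = M₂₁M₁₂ − M₂₁M₁₁M₂₁⁻¹M₂₂. Then for any g = [[T, X], [0, I]] with T invertible, the conjugate M' = g·M·g⁻¹ has invertible lower-left block, and B₁(M') = B₁(M) and B₂(M') = B₂(M). -/
open Matrix

noncomputable def B₁ {n : ℕ} (M : Matrix (Fin n ⊕ Fin n) (Fin n ⊕ Fin n) ℝ) :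
    Matrix (Fin n) (Fin n) ℝ :=
  M.toBlocks₂₁ * M.toBlocks₁₁ * (M.toBlocks₂₁)⁻¹ + M.toBlocks₂₂

noncomputable def B₂ {n : ℕ} (M : Matrix (Fin n ⊕ Fin n) (Fin n ⊕ Fin n) ℝ) :
    Matrix (Fin n) (Fin n) ℝ :=
  M.toBlocks₂₁ * M.toBlocks₁₂ - M.toBlocks₂₁ * M.toBlocks₁₁ * (M.toBlocks₂₁)⁻¹ * M.toBlocks₂₂

theorem stmt9 (n : ℕ) (M : Matrix (Fin n ⊕ Fin n) (Fin n ⊕ Fin n) ℝ)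
    (h21 : IsUnit M.toBlocks₂₁.det)
    (T X : Matrix (Fin n) (Fin n) ℝ) (hT : IsUnit T.det) :
    IsUnit ((Matrix.fromBlocks T X 0 1 * M * (Matrix.fromBlocks T X 0 1)⁻¹).toBlocks₂₁).det ∧
    B₁ (Matrix.fromBlocks T X 0 1 * M * (Matrix.fromBlocks T X 0 1)⁻¹) = B₁ M ∧
    B₂ (Matrix.fromBlocks T X 0 1 * M * (Matrix.fromBlocks T X 0 1)⁻¹) = B₂ M := by
  set A := M.toBlocks₁₁ with hA
  set B := M.toBlocks₁₂ with hB
  set C := M.toBlocks₂₁ with hC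
  set D := M.toBlocks₂₂ with hD
  have hM : M = Matrix.fromBlocks A B C D := (Matrix.fromBlocks_toBlocks M).symm
  have hTT : T * T⁻¹ = 1 := Matrix.mul_nonsing_inv T hT
  have hTT' : T⁻¹ * T = 1 := Matrix.nonsing_inv_mul T hT
  have hCC : C * C⁻¹ = 1 := Matrix.mul_nonsing_inv C h21
  have hCC' : C⁻¹ * C = 1 := Matrix.nonsing_inv_mul C h21
  have hGinv : (Matrix.fromBlocks T X 0 1)⁻¹
      = Matrix.fromBlocks T⁻¹ (-(T⁻¹*X)) 0 (1 : Matrix (Fin n) (Fin n) ℝ) := by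
    apply Matrix.inv_eq_right_inv
    rw [Matrix.fromBlocks_multiply]
    simp [← Matrix.mul_assoc, hTT, Matrix.fromBlocks_one]
  have hprod : Matrix.fromBlocks T X 0 1 * M * (Matrix.fromBlocks T X 0 1)⁻¹
      = Matrix.fromBlocks ((T*A+X*C)*T⁻¹) ((T*A+X*C)*(-(T⁻¹*X)) + (T*B+X*D))
          (C*T⁻¹) (C*(-(T⁻¹*X)) + D) := by
    rw [hGinv, hM, Matrix.fromBlocks_multiply, Matrix.fromBlocks_multiply]
    congr 1 <;> simp
  have hTi : IsUnit (T⁻¹).det := by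
    rw [Matrix.det_nonsing_inv]; exact isUnit_ringInverse.mpr hT
  have hCT : IsUnit (C * T⁻¹).det := by
    rw [Matrix.det_mul]; exact h21.mul hTi
  have hCTinv : (C * T⁻¹)⁻¹ = T * C⁻¹ := by
    rw [Matrix.mul_inv_rev, Matrix.nonsing_inv_nonsing_inv T hT]
  have e1 : ∀ Y : Matrix (Fin n) (Fin n) ℝ, T⁻¹ * (T * Y) = Y := by
    intro Y; rw [← Matrix.mul_assoc, hTT', Matrix.one_mul]
  have e2 : ∀ Y : Matrix (Fin n) (Fin n) ℝ, T * (T⁻¹ * Y) = Y := by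
    intro Y; rw [← Matrix.mul_assoc, hTT, Matrix.one_mul]
  have e3 : ∀ Y : Matrix (Fin n) (Fin n) ℝ, C * (C⁻¹ * Y) = Y := by
    intro Y; rw [← Matrix.mul_assoc, hCC, Matrix.one_mul]
  have e4 : ∀ Y : Matrix (Fin n) (Fin n) ℝ, C⁻¹ * (C * Y) = Y := by
    intro Y; rw [← Matrix.mul_assoc, hCC', Matrix.one_mul]
  refine ⟨?_, ?_, ?_⟩
  · have h := congrArg Matrix.toBlocks₂₁ hprod
    rw [Matrix.toBlocks_fromBlocks₂₁] at h
    exact (congrArg (fun N => IsUnit (Matrix.det N)) h).mpr hCT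
  · rw [hprod]
    unfold B₁
    simp only [Matrix.toBlocks_fromBlocks₁₁, Matrix.toBlocks_fromBlocks₂₁,
      Matrix.toBlocks_fromBlocks₂₂, hCTinv]
    simp [Matrix.mul_add, Matrix.add_mul, Matrix.mul_assoc, e1, e2, e3, e4, hTT, hTT', hCC, hCC',
      Matrix.mul_neg, Matrix.neg_mul]
    abel
  · rw [hprod]
    unfold B₂
    simp only [Matrix.toBlocks_fromBlocks₁₁, Matrix.toBlocks_fromBlocks₁₂,
      Matrix.toBlocks_fromBlocks₂₁, Matrix.toBlocks_fromBlocks₂₂, hCTinv]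
    simp [Matrix.mul_add, Matrix.add_mul, Matrix.mul_assoc, e1, e2, e3, e4, hTT, hTT', hCC, hCC',
      Matrix.mul_neg, Matrix.neg_mul, sub_eq_add_neg]
    abel
end

section
/- Two 2n×2n real matrices M and W, each with invertible lower-left n×n block, satisfy B₁(M) = B₁(W) and B₂(M) = B₂(W) if and only if there exists g in the group P = {[[T, X],[0, I]] : T invertible} with W = g·M·g⁻¹. -/
open Matrix

lemma keyA {n : ℕ} (M : Matrix (Fin n ⊕ Fin n) (Fin n ⊕ Fin n) ℝ)
    (h : IsUnit M.toBlocks₂₁.det) :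
    fromBlocks M.toBlocks₂₁ M.toBlocks₂₂ (0:Matrix (Fin n) (Fin n) ℝ) 1 * M =
      fromBlocks (B₁ M) (B₂ M) (1:Matrix (Fin n) (Fin n) ℝ) 0 * fromBlocks M.toBlocks₂₁ M.toBlocks₂₂ (0:Matrix (Fin n) (Fin n) ℝ) 1 := by
  conv_lhs => rw [← fromBlocks_toBlocks M]
  rw [fromBlocks_multiply, fromBlocks_multiply]
  simp only [toBlocks_fromBlocks₁₁, toBlocks_fromBlocks₁₂, toBlocks_fromBlocks₂₁, toBlocks_fromBlocks₂₂]
  have hinv : (M.toBlocks₂₁)⁻¹ * M.toBlocks₂₁ = 1 := nonsing_inv_mul _ h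
  refine fromBlocks_inj.2 ⟨?_, ?_, ?_, ?_⟩
  · unfold B₁
    rw [add_mul, mul_assoc _ _ M.toBlocks₂₁, hinv, mul_one, mul_zero, add_zero]
  · unfold B₁ B₂
    simp only [mul_one]
    noncomm_ring
  · simp
  · simp

theorem stmt10 (n : ℕ) (M W : Matrix (Fin n ⊕ Fin n) (Fin n ⊕ Fin n) ℝ)
    (hM21 : IsUnit M.toBlocks₂₁.det) (hW21 : IsUnit W.toBlocks₂₁.det) :
    (B₁ M = B₁ W ∧ B₂ M = B₂ W) ↔
      ∃ T X : Matrix (Fin n) (Fin n) ℝ, IsUnit T.det ∧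
        W = Matrix.fromBlocks T X 0 1 * M * (Matrix.fromBlocks T X 0 1)⁻¹ := by
  set gM := fromBlocks M.toBlocks₂₁ M.toBlocks₂₂ (0:Matrix (Fin n) (Fin n) ℝ) 1 with hgM
  set gW := fromBlocks W.toBlocks₂₁ W.toBlocks₂₂ (0:Matrix (Fin n) (Fin n) ℝ) 1 with hgW
  have hgMdet : IsUnit gM.det := by
    rw [hgM, det_fromBlocks_zero₂₁]; simpa using hM21
  have hgWdet : IsUnit gW.det := by
    rw [hgW, det_fromBlocks_zero₂₁]; simpa using hW21
  have hKM := keyA M hM21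
  have hKW := keyA W hW21
  have hWinv : W.toBlocks₂₁⁻¹ * W.toBlocks₂₁ = 1 := nonsing_inv_mul _ hW21
  have hMinv : M.toBlocks₂₁⁻¹ * M.toBlocks₂₁ = 1 := nonsing_inv_mul _ hM21
  constructor
  · rintro ⟨h1, h2⟩
    refine ⟨W.toBlocks₂₁⁻¹ * M.toBlocks₂₁,
      W.toBlocks₂₁⁻¹ * M.toBlocks₂₂ - W.toBlocks₂₁⁻¹ * W.toBlocks₂₂, ?_, ?_⟩
    · rw [det_mul, det_nonsing_inv]
      exact (isUnit_ringInverse.2 hW21).mul hM21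
    · set g := fromBlocks (W.toBlocks₂₁⁻¹ * M.toBlocks₂₁)
        (W.toBlocks₂₁⁻¹ * M.toBlocks₂₂ - W.toBlocks₂₁⁻¹ * W.toBlocks₂₂)
        (0:Matrix (Fin n) (Fin n) ℝ) 1 with hg
      have hgdet : IsUnit g.det := by
        rw [hg, det_fromBlocks_zero₂₁, det_mul, det_nonsing_inv, det_one, mul_one]
        exact (isUnit_ringInverse.2 hW21).mul hM21
      have hgWg : gW * g = gM := by
        rw [hgW, hg, hgM, fromBlocks_multiply]
        refine fromBlocks_inj.2 ⟨?_, ?_, ?_, ?_⟩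
        · rw [← mul_assoc, Matrix.mul_nonsing_inv _ hW21, one_mul]
          simp
        · rw [mul_sub, ← mul_assoc, ← mul_assoc, Matrix.mul_nonsing_inv _ hW21, one_mul]
          noncomm_ring
        · simp
        · simp
      have key : W * g = g * M := by
        have : gW * (W * g) = gW * (g * M) := by
          calc gW * (W * g) = (gW * W) * g := by rw [mul_assoc]
            _ = (fromBlocks (B₁ W) (B₂ W) (1:Matrix (Fin n) (Fin n) ℝ) 0) * gW * g := by
                rw [hKW]
            _ = (fromBlocks (B₁ M) (B₂ M) (1:Matrix (Fin n) (Fin n) ℝ) 0) * gM := by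
                rw [mul_assoc, hgWg, h1, h2]
            _ = gM * M := hKM.symm
            _ = gW * (g * M) := by rw [← hgWg, mul_assoc]
        calc W * g = gW⁻¹ * (gW * (W * g)) := by
              rw [← mul_assoc, Matrix.nonsing_inv_mul _ hgWdet, one_mul]
          _ = gW⁻¹ * (gW * (g * M)) := by rw [this]
          _ = g * M := by rw [← mul_assoc, Matrix.nonsing_inv_mul _ hgWdet, one_mul]
      calc W = W * g * g⁻¹ := by
            rw [mul_assoc, Matrix.mul_nonsing_inv _ hgdet, mul_one]
        _ = g * M * g⁻¹ := by rw [key]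
  · rintro ⟨T, X, hT, hW⟩
    set g := fromBlocks T X (0:Matrix (Fin n) (Fin n) ℝ) 1 with hg
    have hgdet : IsUnit g.det := by rw [hg, det_fromBlocks_zero₂₁]; simpa using hT
    have hWg : W * g = g * M := by
      rw [hW, mul_assoc, Matrix.nonsing_inv_mul _ hgdet, mul_one]
    -- h := gW * g * gM⁻¹ as explicit blocks
    set A := W.toBlocks₂₁ * T * M.toBlocks₂₁⁻¹ with hA
    set Bb := W.toBlocks₂₁ * X + W.toBlocks₂₂ - W.toBlocks₂₁ * T * M.toBlocks₂₁⁻¹ * M.toBlocks₂₂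
      with hB
    set h := fromBlocks A Bb (0:Matrix (Fin n) (Fin n) ℝ) 1 with hh
    have hhgM : h * gM = gW * g := by
      rw [hh, hgM, hgW, hg, fromBlocks_multiply, fromBlocks_multiply]
      refine fromBlocks_inj.2 ⟨?_, ?_, ?_, ?_⟩
      · rw [hA, mul_assoc, Matrix.nonsing_inv_mul _ hM21, mul_one]
        simp
      · rw [hB, hA]
        noncomm_ring
      · simp
      · simp
    have key2 : fromBlocks (B₁ W) (B₂ W) (1:Matrix (Fin n) (Fin n) ℝ) 0 * h =
        h * fromBlocks (B₁ M) (B₂ M) (1:Matrix (Fin n) (Fin n) ℝ) 0 := by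
      have e1 : fromBlocks (B₁ W) (B₂ W) (1:Matrix (Fin n) (Fin n) ℝ) 0 * (h * gM) =
          h * fromBlocks (B₁ M) (B₂ M) (1:Matrix (Fin n) (Fin n) ℝ) 0 * gM := by
        rw [hhgM, ← mul_assoc, ← hKW, mul_assoc, hWg, ← mul_assoc, ← hhgM,
          mul_assoc, mul_assoc, hKM, ← mul_assoc]
      have := congrArg (fun Z => Z * gM⁻¹) e1
      simpa only [mul_assoc, Matrix.mul_nonsing_inv _ hgMdet, mul_one] using this
    rw [fromBlocks_multiply, fromBlocks_multiply, fromBlocks_inj] at key2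
    obtain ⟨e11, e12, e21, e22⟩ := key2
    simp only [one_mul, mul_one, zero_mul, mul_zero, add_zero, zero_add] at e11 e12 e21 e22
    -- e21 : A = 1, e22 : Bb = 0
    constructor
    · have := e11
      rw [e21, e22] at this
      simpa using this.symm
    · have := e12
      rw [e21, e22] at this
      simpa using this.symm
end
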